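/- Let 1 < k₁ ≤ k₂ < ∞ and let (h_ℓ)_{ℓ≥0} be a sequence of positive reals with h₀ ≤ 1 and k₁ ≤ h_{ℓ-1}/h_ℓ ≤ k₂ for all ℓ ≥ 1. Let α, β, γ, c₁, c₂, c₃ > 0 satisfy α ≥ ½·min(β,γ) and β < γ. Then there exists a constant C > 0, depending only on α, β, γ, c₁, c₂, c₃, k₁, k₂ and h₀, such that for every ε with 0 < ε < e^{-1} there exist a level L ∈ ℕ and positive integers N₀, …, N_L with: (i) ∑_{ℓ=0}^{L} c₂ h_ℓ^β / N_ℓ + (c₁ h_L^α)² ≤ ε², and (ii) ∑_{ℓ=0}^{L} N_ℓ · c₃ h_ℓ^{-γ} ≤ C ε^{-2-(γ-β)/α}. -/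

import Mathlib

lemma mlmc_chain (k : ℝ) (hk : 0 < k) (h : ℕ → ℝ)
    (hlow : ∀ ℓ : ℕ, k * h (ℓ + 1) ≤ h ℓ) :
    ∀ i d : ℕ, h (i + d) * k ^ d ≤ h i := by
  intro i d
  induction d with
  | zero => simp
  | succ n ih =>
    calc h (i + (n+1)) * k ^ (n+1) = (k * h (i + n + 1)) * k ^ n := by ring_nf
    _ ≤ h (i + n) * k ^ n :=
        mul_le_mul_of_nonneg_right (hlow (i+n)) (by positivity)
    _ ≤ h i := ih

lemma mlmc_geom (k : ℝ) (hk : 1 < k) (h : ℕ → ℝ) (hpos : ∀ ℓ, 0 < h ℓ)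
    (hlow : ∀ ℓ : ℕ, k * h (ℓ + 1) ≤ h ℓ) (s : ℝ) (hs : s < 0) (L : ℕ) :
    ∑ ℓ ∈ Finset.range (L + 1), h ℓ ^ s ≤ h L ^ s * (1 - k ^ s)⁻¹ := by
  have hk0 : (0:ℝ) < k := lt_trans one_pos hk
  have hr0 : (0:ℝ) < k ^ s := Real.rpow_pos_of_pos hk0 s
  have hr1 : k ^ s < 1 := Real.rpow_lt_one_of_one_lt_of_neg hk hs
  have step : ∀ ℓ ∈ Finset.range (L+1), h ℓ ^ s ≤ h L ^ s * (k ^ s) ^ (L - ℓ) := by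
    intro ℓ hℓ
    have hℓL : ℓ ≤ L := Nat.lt_succ_iff.mp (Finset.mem_range.mp hℓ)
    have hch : h L * k ^ (L - ℓ) ≤ h ℓ := by
      have := mlmc_chain k hk0 h hlow ℓ (L - ℓ)
      rwa [Nat.add_sub_cancel' hℓL] at this
    have hb : (0:ℝ) < h L * k ^ (L - ℓ) := mul_pos (hpos L) (pow_pos hk0 _)
    calc h ℓ ^ s ≤ (h L * k ^ (L - ℓ)) ^ s :=
          Real.rpow_le_rpow_of_nonpos hb hch hs.le
    _ = h L ^ s * (k ^ (L-ℓ) : ℝ) ^ s := Real.mul_rpow (hpos L).le (pow_nonneg hk0.le _)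
    _ = h L ^ s * (k ^ s) ^ (L - ℓ) := by
          congr 1
          rw [← Real.rpow_natCast k (L-ℓ), ← Real.rpow_natCast (k ^ s) (L-ℓ),
            ← Real.rpow_mul hk0.le, ← Real.rpow_mul hk0.le, mul_comm]
  calc ∑ ℓ ∈ Finset.range (L + 1), h ℓ ^ s
      ≤ ∑ ℓ ∈ Finset.range (L + 1), h L ^ s * (k ^ s) ^ (L - ℓ) := Finset.sum_le_sum step
    _ = h L ^ s * ∑ ℓ ∈ Finset.range (L + 1), (k ^ s) ^ (L - ℓ) := by
          rw [Finset.mul_sum]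
    _ = h L ^ s * ∑ j ∈ Finset.range (L + 1), (k ^ s) ^ j := by
          congr 1
          apply Finset.sum_nbij' (fun i => L - i) (fun i => L - i) <;>
            intro a ha <;> simp_all [Finset.mem_range, Nat.lt_succ_iff] <;> omega
    _ ≤ h L ^ s * (1 - k ^ s)⁻¹ := by
          apply mul_le_mul_of_nonneg_left _ (Real.rpow_pos_of_pos (hpos L) s).le
          rw [geom_sum_eq (ne_of_lt hr1) (L+1), ← neg_div_neg_eq, neg_sub, neg_sub,
            div_le_iff₀ (by linarith : (0:ℝ) < 1 - k ^ s), inv_mul_cancel₀ (by linarith : (1:ℝ) - k^s ≠ 0)]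
          nlinarith [pow_pos hr0 (L+1)]

set_option maxHeartbeats 1000000 in
/-- Abstract multilevel Monte Carlo complexity theorem, case β < γ. -/
theorem mlmc_complexity_beta_lt_gamma
    (k₁ k₂ : ℝ) (hk₁ : 1 < k₁) (hk₁₂ : k₁ ≤ k₂)
    (h : ℕ → ℝ) (hpos : ∀ ℓ, 0 < h ℓ) (hh0 : h 0 ≤ 1)
    (hlow : ∀ ℓ : ℕ, k₁ ≤ h ℓ / h (ℓ + 1))
    (hhigh : ∀ ℓ : ℕ, h ℓ / h (ℓ + 1) ≤ k₂)
    (α β γ c₁ c₂ c₃ : ℝ)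
    (hα : 0 < α) (hβ : 0 < β) (hγ : 0 < γ)
    (hc₁ : 0 < c₁) (hc₂ : 0 < c₂) (hc₃ : 0 < c₃)
    (hαβγ : α ≥ (1 / 2) * min β γ) (hβγ : β < γ) :
    ∃ C : ℝ, 0 < C ∧ ∀ ε : ℝ, 0 < ε → ε < Real.exp (-1) →
      ∃ (L : ℕ) (N : ℕ → ℕ), (∀ ℓ ≤ L, 0 < N ℓ) ∧
        (∑ ℓ ∈ Finset.range (L + 1), c₂ * h ℓ ^ β / (N ℓ : ℝ)) + (c₁ * h L ^ α) ^ 2 ≤ ε ^ 2 ∧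
        (∑ ℓ ∈ Finset.range (L + 1), (N ℓ : ℝ) * (c₃ * h ℓ ^ (-γ))) ≤ C * ε ^ (-2 - (γ - β) / α) := by
  have hk₁0 : (0:ℝ) < k₁ := lt_trans one_pos hk₁
  have hk₂0 : (0:ℝ) < k₂ := lt_of_lt_of_le hk₁0 hk₁₂
  have hstep : ∀ ℓ : ℕ, k₁ * h (ℓ + 1) ≤ h ℓ := fun ℓ =>
    (le_div_iff₀ (hpos (ℓ+1))).mp (hlow ℓ)
  have hstep₂ : ∀ ℓ : ℕ, h ℓ ≤ k₂ * h (ℓ + 1) := fun ℓ =>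
    (div_le_iff₀ (hpos (ℓ+1))).mp (hhigh ℓ)
  set s : ℝ := (β - γ)/2 with hs_def
  have hs : s < 0 := by rw [hs_def]; linarith
  have hβ2α : β ≤ 2*α := by
    rw [min_eq_left hβγ.le] at hαβγ; linarith
  set cst : ℝ := min (h 0) ((1/(2*c₁)) ^ ((1:ℝ)/α) / k₂) with hcst_def
  have hcst : 0 < cst := lt_min (hpos 0)
    (div_pos (Real.rpow_pos_of_pos (by positivity) _) hk₂0)
  have hr1 : k₁ ^ s < 1 := Real.rpow_lt_one_of_one_lt_of_neg hk₁ hs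
  have hr1' : k₁ ^ (-γ) < 1 := Real.rpow_lt_one_of_one_lt_of_neg hk₁ (by linarith)
  set A : ℝ := (1 - k₁ ^ s)⁻¹ with hA_def
  set A' : ℝ := (1 - k₁ ^ (-γ))⁻¹ with hA'_def
  have hA : 0 < A := inv_pos.mpr (by linarith)
  have hA' : 0 < A' := inv_pos.mpr (by linarith)
  set B : ℝ := 2 * c₂ * A * cst ^ s with hB_def
  have hB : 0 < B := by
    have := Real.rpow_pos_of_pos hcst s; positivity
  set t : ℝ := 2 + (γ - β)/(2*α) with ht_def
  refine ⟨c₃*B*A*cst^s + c₃*A'*cst^(-γ), by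
    have h1 := Real.rpow_pos_of_pos hcst s
    have h2 := Real.rpow_pos_of_pos hcst (-γ)
    positivity, ?_⟩
  intro ε hε hεe
  have hε1 : ε < 1 := lt_trans hεe (by
    rw [← Real.exp_zero]; exact Real.exp_lt_exp.mpr (by norm_num))
  set T : ℝ := (ε/(2*c₁)) ^ ((1:ℝ)/α) with hT_def
  have hεc : (0:ℝ) < ε/(2*c₁) := by positivity
  have hT0 : 0 < T := Real.rpow_pos_of_pos hεc _
  -- existence of a level with h n ≤ T
  have hex : ∃ n, h n ≤ T := by
    obtain ⟨n, hn⟩ := exists_pow_lt_of_lt_one (div_pos hT0 (hpos 0))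
      (show 1/k₁ < 1 by rw [div_lt_one hk₁0]; exact hk₁)
    refine ⟨n, ?_⟩
    have hchain := mlmc_chain k₁ hk₁0 h hstep 0 n
    rw [zero_add] at hchain
    have hkn : (0:ℝ) < k₁ ^ n := pow_pos hk₁0 n
    have h1 : h n ≤ h 0 * (1/k₁)^n := by
      rw [one_div, inv_pow, mul_comm, ← div_eq_inv_mul, le_div_iff₀ hkn, mul_comm (h n)]
      rwa [mul_comm] at hchain
    calc h n ≤ h 0 * (1/k₁)^n := h1
    _ ≤ h 0 * (T / h 0) := mul_le_mul_of_nonneg_left hn.le (hpos 0).le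
    _ = T := by rw [mul_comm]; exact div_mul_cancel₀ T (hpos 0).ne'
  set L := Nat.find hex with hL_def
  have hL : h L ≤ T := Nat.find_spec hex
  have hLmin : ∀ m, m < L → T < h m := fun m hm =>
    lt_of_not_ge (Nat.find_min hex hm)
  have hεα0 : (0:ℝ) < ε ^ ((1:ℝ)/α) := Real.rpow_pos_of_pos hε _
  have hεα1 : ε ^ ((1:ℝ)/α) ≤ 1 :=
    Real.rpow_le_one hε.le hε1.le (by positivity)
  have hTsplit : T = ε ^ ((1:ℝ)/α) * (1/(2*c₁)) ^ ((1:ℝ)/α) := by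
    rw [hT_def, show ε/(2*c₁) = ε * (1/(2*c₁)) by ring,
      Real.mul_rpow hε.le (by positivity)]
  -- lower bound on h L
  have hLlb : cst * ε ^ ((1:ℝ)/α) ≤ h L := by
    rcases Nat.eq_zero_or_pos L with hL0 | hL0
    · rw [hL0]
      calc cst * ε ^ ((1:ℝ)/α) ≤ h 0 * 1 :=
            mul_le_mul (min_le_left _ _) hεα1 hεα0.le (hpos 0).le
      _ = h 0 := mul_one _
    · obtain ⟨m, hm⟩ : ∃ m, L = m + 1 := ⟨L - 1, (Nat.succ_pred_eq_of_pos hL0).symm⟩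
      have hTm : T < h m := hLmin m (by omega)
      have h1 : h m ≤ k₂ * h L := by rw [hm]; exact hstep₂ m
      have h2 : T / k₂ ≤ h L := by
        rw [div_le_iff₀ hk₂0]
        calc T ≤ h m := hTm.le
        _ ≤ k₂ * h L := h1
        _ = h L * k₂ := mul_comm _ _
      calc cst * ε ^ ((1:ℝ)/α)
          ≤ ((1/(2*c₁)) ^ ((1:ℝ)/α) / k₂) * ε ^ ((1:ℝ)/α) :=
            mul_le_mul_of_nonneg_right (min_le_right _ _) hεα0.le
      _ = T / k₂ := by rw [hTsplit]; ring
      _ ≤ h L := h2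
  -- key summation bound
  have key : ∀ u : ℝ, u < 0 →
      ∑ ℓ ∈ Finset.range (L+1), h ℓ ^ u ≤ cst ^ u * ε ^ (u/α) * (1 - k₁ ^ u)⁻¹ := by
    intro u hu
    have h1 := mlmc_geom k₁ hk₁ h hpos hstep u hu L
    have hru : k₁ ^ u < 1 := Real.rpow_lt_one_of_one_lt_of_neg hk₁ hu
    have h2 : h L ^ u ≤ cst ^ u * ε ^ (u/α) := by
      have hb : (0:ℝ) < cst * ε ^ ((1:ℝ)/α) := mul_pos hcst hεα0
      calc h L ^ u ≤ (cst * ε ^ ((1:ℝ)/α)) ^ u :=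
            Real.rpow_le_rpow_of_nonpos hb hLlb hu.le
      _ = cst ^ u * (ε ^ ((1:ℝ)/α)) ^ u := Real.mul_rpow hcst.le hεα0.le
      _ = cst ^ u * ε ^ (u/α) := by
            rw [← Real.rpow_mul hε.le]
            congr 1
            field_simp
    calc ∑ ℓ ∈ Finset.range (L+1), h ℓ ^ u ≤ h L ^ u * (1 - k₁ ^ u)⁻¹ := h1
    _ ≤ cst ^ u * ε ^ (u/α) * (1 - k₁ ^ u)⁻¹ :=
        mul_le_mul_of_nonneg_right h2 (inv_nonneg.mpr (by linarith))
  -- samples per level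
  set N : ℕ → ℕ := fun ℓ => ⌈B * h ℓ ^ ((β+γ)/2) * ε ^ (-t)⌉₊ with hN_def
  have hNexpr : ∀ ℓ, (0:ℝ) < B * h ℓ ^ ((β+γ)/2) * ε ^ (-t) := fun ℓ => by
    have h1 := Real.rpow_pos_of_pos (hpos ℓ) ((β+γ)/2)
    have h2 := Real.rpow_pos_of_pos hε (-t)
    positivity
  have hNpos : ∀ ℓ, 0 < N ℓ := fun ℓ => Nat.ceil_pos.mpr (hNexpr ℓ)
  have hNge : ∀ ℓ, B * h ℓ ^ ((β+γ)/2) * ε ^ (-t) ≤ (N ℓ : ℝ) := fun ℓ => Nat.le_ceil _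
  have hNle : ∀ ℓ, (N ℓ : ℝ) ≤ B * h ℓ ^ ((β+γ)/2) * ε ^ (-t) + 1 := fun ℓ =>
    (Nat.ceil_lt_add_one (hNexpr ℓ).le).le
  have hsplitβ : ∀ ℓ, h ℓ ^ β = h ℓ ^ s * h ℓ ^ ((β+γ)/2) := by
    intro ℓ
    rw [← Real.rpow_add (hpos ℓ)]
    congr 1
    rw [hs_def]; ring
  have hsplitγ : ∀ ℓ, h ℓ ^ ((β+γ)/2) * h ℓ ^ (-γ) = h ℓ ^ s := by
    intro ℓ
    rw [← Real.rpow_add (hpos ℓ)]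
    congr 1
    rw [hs_def]; ring
  refine ⟨L, N, fun ℓ _ => hNpos ℓ, ?_, ?_⟩
  · -- condition (i)
    have var_term : ∀ ℓ ∈ Finset.range (L+1),
        c₂ * h ℓ ^ β / (N ℓ : ℝ) ≤ (c₂/B) * ε ^ t * h ℓ ^ s := by
      intro ℓ _
      have hx := hNexpr ℓ
      have h1 : c₂ * h ℓ ^ β / (N ℓ:ℝ) ≤ c₂ * h ℓ ^ β / (B * h ℓ^((β+γ)/2) * ε^(-t)) := by
        apply div_le_div_of_nonneg_left _ hx (hNge ℓ)
        have := Real.rpow_pos_of_pos (hpos ℓ) β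
        positivity
      refine h1.trans_eq ?_
      rw [hsplitβ ℓ, Real.rpow_neg hε.le t]
      have hεt : (0:ℝ) < ε ^ t := Real.rpow_pos_of_pos hε t
      have hhs' : (0:ℝ) < h ℓ ^ ((β+γ)/2) := Real.rpow_pos_of_pos (hpos ℓ) _
      field_simp
    have hsum1 : ∑ ℓ ∈ Finset.range (L+1), c₂ * h ℓ ^ β / (N ℓ : ℝ)
        ≤ (c₂/B) * ε ^ t * (cst ^ s * ε ^ (s/α) * A) := by
      calc ∑ ℓ ∈ Finset.range (L+1), c₂ * h ℓ ^ β / (N ℓ : ℝ)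
          ≤ ∑ ℓ ∈ Finset.range (L+1), (c₂/B) * ε ^ t * h ℓ ^ s :=
            Finset.sum_le_sum var_term
      _ = (c₂/B) * ε ^ t * ∑ ℓ ∈ Finset.range (L+1), h ℓ ^ s := by
            rw [Finset.mul_sum]
      _ ≤ (c₂/B) * ε ^ t * (cst ^ s * ε ^ (s/α) * A) := by
            apply mul_le_mul_of_nonneg_left (key s hs)
            have := Real.rpow_pos_of_pos hε t
            positivity
    have heq1 : (c₂/B) * ε ^ t * (cst ^ s * ε ^ (s/α) * A) = ε ^ 2 / 2 := by
      have hcsts : (0:ℝ) < cst ^ s := Real.rpow_pos_of_pos hcst s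
      have hts : t + s/α = 2 := by
        rw [ht_def, hs_def]; field_simp; ring
      have hprod : ε ^ t * ε ^ (s/α) = ε ^ (2:ℕ) := by
        rw [← Real.rpow_add hε, hts, show ((2:ℝ)) = ((2:ℕ):ℝ) by norm_num,
          Real.rpow_natCast]
      have hD : (0:ℝ) < c₂ * A * cst ^ s := by positivity
      calc (c₂/B) * ε ^ t * (cst ^ s * ε ^ (s/α) * A)
          = (ε ^ t * ε ^ (s/α)) * ((c₂ * A * cst ^ s) / B) := by ring
      _ = ε ^ 2 * ((c₂ * A * cst ^ s) / (2 * (c₂ * A * cst ^ s))) := by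
          rw [hprod, hB_def]; ring_nf
      _ = ε ^ 2 / 2 := by
          rw [show (c₂ * A * cst ^ s) / (2 * (c₂ * A * cst ^ s)) = 1/2 by
            rw [mul_comm 2 (c₂ * A * cst ^ s), ← div_div, div_self hD.ne']]
          ring
    have hbias : c₁ * h L ^ α ≤ ε / 2 := by
      have h1 : h L ^ α ≤ T ^ α := Real.rpow_le_rpow (hpos L).le hL hα.le
      have h2 : T ^ α = ε / (2*c₁) := by
        rw [hT_def, ← Real.rpow_mul hεc.le, one_div_mul_cancel hα.ne', Real.rpow_one]
      calc c₁ * h L ^ α ≤ c₁ * (ε/(2*c₁)) := by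
            rw [← h2]; exact mul_le_mul_of_nonneg_left h1 hc₁.le
      _ = ε/2 := by field_simp
    have hbias2 : (c₁ * h L ^ α) ^ 2 ≤ ε ^ 2 / 4 := by
      have h0 : (0:ℝ) ≤ c₁ * h L ^ α := by
        have := Real.rpow_pos_of_pos (hpos L) α; positivity
      calc (c₁ * h L ^ α) ^ 2 ≤ (ε/2) ^ 2 := pow_le_pow_left₀ h0 hbias 2
      _ = ε ^ 2 / 4 := by ring
    calc (∑ ℓ ∈ Finset.range (L + 1), c₂ * h ℓ ^ β / (N ℓ : ℝ)) + (c₁ * h L ^ α) ^ 2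
        ≤ ε ^ 2 / 2 + ε ^ 2 / 4 := by
          rw [← heq1]; exact add_le_add hsum1 hbias2
    _ ≤ ε ^ 2 := by have := sq_nonneg ε; rw [sq] at this; nlinarith
  · -- condition (ii)
    have cost_term : ∀ ℓ ∈ Finset.range (L+1),
        (N ℓ:ℝ) * (c₃ * h ℓ ^ (-γ)) ≤ c₃*B*ε^(-t) * h ℓ ^ s + c₃ * h ℓ ^ (-γ) := by
      intro ℓ _
      have hγpos : (0:ℝ) < c₃ * h ℓ ^ (-γ) := by
        have := Real.rpow_pos_of_pos (hpos ℓ) (-γ); positivity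
      calc (N ℓ:ℝ) * (c₃ * h ℓ ^ (-γ))
          ≤ (B * h ℓ ^ ((β+γ)/2) * ε ^ (-t) + 1) * (c₃ * h ℓ ^ (-γ)) :=
            mul_le_mul_of_nonneg_right (hNle ℓ) hγpos.le
      _ = c₃*B*ε^(-t) * (h ℓ ^ ((β+γ)/2) * h ℓ ^ (-γ)) + c₃ * h ℓ ^ (-γ) := by ring
      _ = c₃*B*ε^(-t) * h ℓ ^ s + c₃ * h ℓ ^ (-γ) := by rw [hsplitγ ℓ]
    have hεnt : (0:ℝ) < ε ^ (-t) := Real.rpow_pos_of_pos hε _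
    have hsum : ∑ ℓ ∈ Finset.range (L + 1), (N ℓ : ℝ) * (c₃ * h ℓ ^ (-γ))
        ≤ c₃*B*ε^(-t) * (cst ^ s * ε ^ (s/α) * A) + c₃ * (cst ^ (-γ) * ε ^ (-γ/α) * A') := by
      calc ∑ ℓ ∈ Finset.range (L + 1), (N ℓ : ℝ) * (c₃ * h ℓ ^ (-γ))
          ≤ ∑ ℓ ∈ Finset.range (L+1), (c₃*B*ε^(-t) * h ℓ ^ s + c₃ * h ℓ ^ (-γ)) :=
            Finset.sum_le_sum cost_term
      _ = c₃*B*ε^(-t) * (∑ ℓ ∈ Finset.range (L+1), h ℓ ^ s)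
            + c₃ * (∑ ℓ ∈ Finset.range (L+1), h ℓ ^ (-γ)) := by
            rw [Finset.sum_add_distrib, Finset.mul_sum, Finset.mul_sum]
      _ ≤ _ := by
            apply add_le_add
            · exact mul_le_mul_of_nonneg_left (key s hs) (by positivity)
            · exact mul_le_mul_of_nonneg_left (key (-γ) (by linarith)) hc₃.le
    refine hsum.trans ?_
    have hm : -t + s/α = -2 - (γ-β)/α := by
      rw [ht_def, hs_def]; field_simp; ring
    have hεexp1 : ε^(-t) * ε^(s/α) = ε ^ (-2 - (γ-β)/α) := by
      rw [← Real.rpow_add hε, hm]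
    have hεexp2 : ε ^ (-γ/α) ≤ ε ^ (-2 - (γ-β)/α) := by
      apply Real.rpow_le_rpow_of_exponent_ge hε hε1.le
      have e : -γ/α - (-2-(γ-β)/α) = 2 - β/α := by field_simp; ring
      have hβα : β/α ≤ 2 := (div_le_iff₀ hα).mpr (by linarith)
      linarith
    have hcsts : (0:ℝ) < cst ^ s := Real.rpow_pos_of_pos hcst s
    have hcstγ : (0:ℝ) < cst ^ (-γ) := Real.rpow_pos_of_pos hcst (-γ)
    calc c₃*B*ε^(-t) * (cst ^ s * ε ^ (s/α) * A) + c₃ * (cst ^ (-γ) * ε ^ (-γ/α) * A')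
        = c₃*B*A*cst^s * (ε^(-t) * ε^(s/α)) + c₃*A'*cst^(-γ) * ε^(-γ/α) := by ring
    _ ≤ c₃*B*A*cst^s * ε ^ (-2 - (γ-β)/α) + c₃*A'*cst^(-γ) * ε ^ (-2 - (γ-β)/α) := by
        rw [hεexp1]
        exact add_le_add le_rfl (mul_le_mul_of_nonneg_left hεexp2 (by positivity))
    _ = (c₃*B*A*cst^s + c₃*A'*cst^(-γ)) * ε ^ (-2 - (γ-β)/α) := by ring
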